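/- Let n > k ≥ 4 be integers. Then the minimum number of edges over all W_k-saturated graphs on n vertices that contain a vertex of degree n − 1 equals (n − 1) + sat(n − 1, C_k). -/

import Mathlib

open SimpleGraph

/-- `G` contains a copy of `F`, i.e. a subgraph isomorphic to `F`. -/
def HasCopy {V W : Type*} (F : SimpleGraph V) (G : SimpleGraph W) : Prop :=
  ∃ f : F →g G, Function.Injective f

/-- `G` is `F`-free: `G` contains no subgraph isomorphic to `F`. -/
def IsFree {V W : Type*} (F : SimpleGraph V) (G : SimpleGraph W) : Prop :=
  ¬ HasCopy F G

/-- `G` is `F`-semi-saturated: for every pair of non-adjacent vertices `u ≠ v`,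
the graph `G + uv` contains a copy of `F` using the edge `uv`. -/
def IsSemiSat {V W : Type*} (F : SimpleGraph V) (G : SimpleGraph W) : Prop :=
  ∀ u v : W, u ≠ v → ¬ G.Adj u v →
    ∃ f : F →g (G ⊔ fromEdgeSet {s(u, v)}), Function.Injective f ∧
      ∃ a b : V, F.Adj a b ∧ f a = u ∧ f b = v

/-- `G` is `F`-saturated: `F`-free and `F`-semi-saturated. -/
def IsSat {V W : Type*} (F : SimpleGraph V) (G : SimpleGraph W) : Prop :=
  IsFree F G ∧ IsSemiSat F G

/-- The join `G ∨ H` of two graphs. -/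
def graphJoin {V W : Type*} (G : SimpleGraph V) (H : SimpleGraph W) :
    SimpleGraph (V ⊕ W) where
  Adj x y :=
    match x, y with
    | Sum.inl a, Sum.inl b => G.Adj a b
    | Sum.inr a, Sum.inr b => H.Adj a b
    | Sum.inl _, Sum.inr _ => True
    | Sum.inr _, Sum.inl _ => True
  symm := ⟨by rintro (a | a) (b | b) h <;> first | exact G.symm h | exact H.symm h | exact G.adj_symm h | exact H.adj_symm h | trivial⟩
  loopless := ⟨by rintro (a | a) h <;> first | exact G.loopless a h | exact H.loopless a h | exact G.irrefl h | exact H.irrefl h⟩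

/-- The wheel `W_k = K_1 ∨ C_k`. -/
def wheel (k : ℕ) : SimpleGraph (Unit ⊕ Fin k) :=
  graphJoin (⊥ : SimpleGraph Unit) (cycleGraph k)

/-- `sat(n, F)`: the minimum number of edges in an `F`-saturated graph on `n` vertices. -/
noncomputable def satNumber {V : Type*} (F : SimpleGraph V) (n : ℕ) : ℕ :=
  sInf { m | ∃ G : SimpleGraph (Fin n), IsSat F G ∧ G.edgeSet.ncard = m }

/-- `ssat(n, F)`: the minimum number of edges in an `F`-semi-saturated graph on `n` vertices. -/
noncomputable def ssatNumber {V : Type*} (F : SimpleGraph V) (n : ℕ) : ℕ :=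
  sInf { m | ∃ G : SimpleGraph (Fin n), IsSemiSat F G ∧ G.edgeSet.ncard = m }

/- ### auxiliary -/

variable {W : Type*}

/-- The cone over `H`: apex `none` joined to everything. -/
def cone (H : SimpleGraph W) : SimpleGraph (Option W) where
  Adj x y :=
    match x, y with
    | none, none => False
    | none, some _ => True
    | some _, none => True
    | some a, some b => H.Adj a b
  symm := ⟨by rintro (_ | a) (_ | b) h <;> first | exact h.elim | exact H.adj_symm h | trivial⟩
  loopless := ⟨by rintro (_ | a) h <;> first | exact h | exact H.irrefl h⟩

@[simp] lemma cone_adj_some_some {H : SimpleGraph W} {a b : W} :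
    (cone H).Adj (some a) (some b) ↔ H.Adj a b := Iff.rfl

@[simp] lemma cone_adj_none_some {H : SimpleGraph W} {b : W} :
    (cone H).Adj none (some b) := trivial

@[simp] lemma cone_adj_some_none {H : SimpleGraph W} {a : W} :
    (cone H).Adj (some a) none := trivial

@[simp] lemma cone_adj_none_none {H : SimpleGraph W} :
    ¬ (cone H).Adj none none := fun h => h

@[simp] lemma wheel_adj_inr_inr {k : ℕ} {i j : Fin k} :
    (wheel k).Adj (Sum.inr i) (Sum.inr j) ↔ (cycleGraph k).Adj i j := Iff.rfl

@[simp] lemma wheel_adj_inl_inr {k : ℕ} {u : Unit} {j : Fin k} :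
    (wheel k).Adj (Sum.inl u) (Sum.inr j) := trivial

@[simp] lemma wheel_adj_inr_inl {k : ℕ} {u : Unit} {j : Fin k} :
    (wheel k).Adj (Sum.inr j) (Sum.inl u) := trivial

@[simp] lemma wheel_adj_inl_inl {k : ℕ} {u v : Unit} :
    ¬ (wheel k).Adj (Sum.inl u) (Sum.inl v) := fun h => h

/-- From an injective copy of the wheel in a cone, extract an injective copy
of the cycle in the base. -/
lemma extract_cycle {k : ℕ} {H : SimpleGraph W}
    (F : wheel k →g cone H) (hF : Function.Injective F) :
    ∃ g : cycleGraph k →g H, Function.Injective g := by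
  classical
  by_cases hnone : ∃ i0 : Fin k, F (Sum.inr i0) = none
  · obtain ⟨i0, hi0⟩ := hnone
    have hhub : F (Sum.inl ()) ≠ none := by
      intro h
      exact absurd (hF (h.trans hi0.symm)) (by simp)
    obtain ⟨h, hh⟩ := Option.ne_none_iff_exists'.mp hhub
    have hrim : ∀ i : Fin k, i ≠ i0 → F (Sum.inr i) ≠ none := by
      intro i hi hcon
      exact hi (Sum.inr_injective (hF (hcon.trans hi0.symm)))
    choose d hd using fun (i : Fin k) (hi : i ≠ i0) =>
      Option.ne_none_iff_exists'.mp (hrim i hi)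
    set g : Fin k → W := fun i => if hi : i = i0 then h else d i hi with hg
    have hgi0 : g i0 = h := by simp [hg]
    have hmap : ∀ i, ∀ hi : i ≠ i0, F (Sum.inr i) = some (g i) := by
      intro i hi
      rw [hd i hi]
      simp [hg, dif_neg hi]
    have hhubmap : ∀ (i : Fin k), (cone H).Adj (some h) (F (Sum.inr i)) := by
      intro i
      rw [← hh]
      exact F.map_adj (by simp)
    have hginj : Function.Injective g := by
      intro i j hij
      by_cases hi : i = i0 <;> by_cases hj : j = i0
      · rw [hi, hj]
      · exfalso
        have h1 : F (Sum.inl ()) = F (Sum.inr j) := by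
          rw [hh, hmap j hj, ← hij, hi, hgi0]
        exact absurd (hF h1) (by simp)
      · exfalso
        have h1 : F (Sum.inl ()) = F (Sum.inr i) := by
          rw [hh, hmap i hi, hij, hj, hgi0]
        exact absurd (hF h1) (by simp)
      · have h1 : F (Sum.inr i) = F (Sum.inr j) := by
          rw [hmap i hi, hmap j hj, hij]
        exact Sum.inr_injective (hF h1)
    have hgmap : ∀ i j, (cycleGraph k).Adj i j → H.Adj (g i) (g j) := by
      intro i j hij
      have hne : i ≠ j := hij.ne
      by_cases hi : i = i0 <;> by_cases hj : j = i0
      · exact absurd (hi.trans hj.symm) hne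
      · have := hhubmap j
        rw [hmap j hj] at this
        rw [hi, hgi0]
        exact this
      · have := hhubmap i
        rw [hmap i hi] at this
        rw [hj, hgi0]
        exact H.adj_symm this
      · have := F.map_adj (wheel_adj_inr_inr.mpr hij)
        rw [hmap i hi, hmap j hj] at this
        exact this
    exact ⟨⟨g, fun hadj => hgmap _ _ hadj⟩, fun a b hab => hginj hab⟩
  · push_neg at hnone
    choose d hd using fun (i : Fin k) => Option.ne_none_iff_exists'.mp (hnone i)
    have hdinj : Function.Injective d := by
      intro i j hij
      have h1 : F (Sum.inr i) = F (Sum.inr j) := by rw [hd i, hd j, hij]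
      exact Sum.inr_injective (hF h1)
    have hdmap : ∀ i j, (cycleGraph k).Adj i j → H.Adj (d i) (d j) := by
      intro i j hij
      have := F.map_adj (wheel_adj_inr_inr.mpr hij)
      rw [hd i, hd j] at this
      exact this
    exact ⟨⟨d, fun hadj => hdmap _ _ hadj⟩, fun a b hab => hdinj hab⟩

/-- From an injective copy of the cycle in `H`, build an injective copy of
the wheel in the cone over `H`. -/
lemma wheel_copy_of_cycle {k : ℕ} {H : SimpleGraph W}
    (g : cycleGraph k →g H) (hg : Function.Injective g) :
    ∃ F : wheel k →g cone H, Function.Injective F ∧ ∀ i, F (Sum.inr i) = some (g i) := by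
  refine ⟨⟨fun x => match x with | Sum.inl _ => none | Sum.inr i => some (g i), ?_⟩, ?_, fun i => rfl⟩
  · rintro (u | i) (v | j) hadj
    · exact absurd hadj (by simp)
    · simp
    · simp
    · exact g.map_adj hadj
  · rintro (u | i) (v | j) h
    · simp
    · simp at h
    · simp at h
    · exact congrArg _ (hg (Option.some_injective _ h))
lemma cone_sup_edge {H : SimpleGraph W} {a b : W} :
    cone (H ⊔ fromEdgeSet {s(a, b)}) = cone H ⊔ fromEdgeSet {s(some a, some b)} := by
  ext x y
  rcases x with _ | x <;> rcases y with _ | y <;>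
    simp [cone, sup_adj, fromEdgeSet_adj, Sym2.eq_iff]

/-- If `H` is `C_k`-free and the cycle embeds in `H` plus one edge `ab`, then the copy
uses the edge `ab`. -/
lemma cycle_uses_edge {k : ℕ} {H : SimpleGraph W} (hfree : IsFree (cycleGraph k) H)
    {a b : W} (g : cycleGraph k →g (H ⊔ fromEdgeSet {s(a, b)}))
    (hg : Function.Injective g) :
    ∃ x y, (cycleGraph k).Adj x y ∧ g x = a ∧ g y = b := by
  by_contra hcon
  push_neg at hcon
  apply hfree
  refine ⟨⟨g, ?_⟩, hg⟩
  intro x y hxy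
  have := g.map_adj hxy
  rw [sup_adj, fromEdgeSet_adj] at this
  rcases this with h | ⟨hmem, _⟩
  · exact h
  · simp only [Set.mem_singleton_iff, Sym2.eq_iff] at hmem
    rcases hmem with ⟨h1, h2⟩ | ⟨h1, h2⟩
    · exact absurd h2 (hcon x y hxy h1)
    · exact absurd h1 (hcon y x hxy.symm h2)

lemma isFree_cone_iff {k : ℕ} {H : SimpleGraph W} :
    IsFree (wheel k) (cone H) ↔ IsFree (cycleGraph k) H := by
  constructor
  · intro hf ⟨g, hg⟩
    obtain ⟨F, hF, -⟩ := wheel_copy_of_cycle g hg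
    exact hf ⟨F, hF⟩
  · intro hf ⟨F, hF⟩
    exact hf (extract_cycle F hF)

lemma isSat_cone_of_isSat {k : ℕ} {H : SimpleGraph W} (hH : IsSat (cycleGraph k) H) :
    IsSat (wheel k) (cone H) := by
  refine ⟨isFree_cone_iff.mpr hH.1, ?_⟩
  rintro (_ | a) (_ | b) hne hnadj
  · exact absurd rfl hne
  · exact absurd cone_adj_none_some hnadj
  · exact absurd cone_adj_some_none hnadj
  · have hab : a ≠ b := fun h => hne (by rw [h])
    obtain ⟨f, hf, x, y, hxy, hfx, hfy⟩ := hH.2 a b hab (fun h => hnadj h)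
    rw [← cone_sup_edge]
    obtain ⟨F, hF, hFr⟩ := wheel_copy_of_cycle f hf
    refine ⟨F, hF, Sum.inr x, Sum.inr y, by simpa using hxy, ?_, ?_⟩
    · rw [hFr x, hfx]
    · rw [hFr y, hfy]

lemma isSat_of_isSat_cone {k : ℕ} {H : SimpleGraph W} (hC : IsSat (wheel k) (cone H)) :
    IsSat (cycleGraph k) H := by
  have hfree : IsFree (cycleGraph k) H := isFree_cone_iff.mp hC.1
  refine ⟨hfree, ?_⟩
  intro a b hab hnadj
  have h1 : (some a : Option W) ≠ some b := fun h => hab (Option.some_injective _ h)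
  have h2 : ¬ (cone H).Adj (some a) (some b) := hnadj
  obtain ⟨F, hF, -⟩ := hC.2 (some a) (some b) h1 h2
  have hEx : ∃ F' : wheel k →g cone (H ⊔ fromEdgeSet {s(a, b)}), Function.Injective F' := by
    rw [cone_sup_edge]
    exact ⟨F, hF⟩
  obtain ⟨F', hF'⟩ := hEx
  obtain ⟨g, hg⟩ := extract_cycle F' hF' 
  obtain ⟨x, y, hxy, hgx, hgy⟩ := cycle_uses_edge hfree g hg
  exact ⟨g, hg, x, y, hxy, hgx, hgy⟩

section comapTransport

variable {V V' U : Type*} (e : V ≃ V') (G' : SimpleGraph V') {F : SimpleGraph U}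

/-- Pulling back along an equivalence gives an isomorphic graph. -/
def comapIso : G'.comap ⇑e ≃g G' := ⟨e, Iff.rfl⟩

lemma comap_comap_symm : (G'.comap ⇑e).comap ⇑e.symm = G' := by
  ext x y
  simp [SimpleGraph.comap]

lemma hasCopy_comap_mp (h : HasCopy F (G'.comap ⇑e)) : HasCopy F G' := by
  obtain ⟨f, hf⟩ := h
  exact ⟨(SimpleGraph.Hom.comap ⇑e G').comp f, e.injective.comp hf⟩

lemma hasCopy_comap_iff : HasCopy F (G'.comap ⇑e) ↔ HasCopy F G' := by
  refine ⟨hasCopy_comap_mp e G', fun h => ?_⟩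
  have h2 := hasCopy_comap_mp (F := F) e.symm (G'.comap ⇑e)
  rw [comap_comap_symm] at h2
  exact h2 h

lemma comap_sup_fromEdgeSet {u v : V'} :
    (G'.comap ⇑e) ⊔ fromEdgeSet {s(e.symm u, e.symm v)}
      = (G' ⊔ fromEdgeSet {s(u, v)}).comap ⇑e := by
  ext x y
  simp only [sup_adj, fromEdgeSet_adj, SimpleGraph.comap_adj, Set.mem_singleton_iff,
    Sym2.eq_iff, Equiv.eq_symm_apply, ne_eq]
  constructor
  · rintro (h | ⟨h1 | h1, h2⟩)
    · exact Or.inl h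
    · exact Or.inr ⟨Or.inl ⟨h1.1.symm ▸ by simp, h1.2.symm ▸ by simp⟩, by simp [h2]⟩
    · exact Or.inr ⟨Or.inr ⟨h1.1.symm ▸ by simp, h1.2.symm ▸ by simp⟩, by simp [h2]⟩
  · rintro (h | ⟨h1 | h1, h2⟩)
    · exact Or.inl h
    · exact Or.inr ⟨Or.inl ⟨by simp [← h1.1], by simp [← h1.2]⟩,
        fun hx => h2 (by rw [hx])⟩
    · exact Or.inr ⟨Or.inr ⟨by simp [← h1.1], by simp [← h1.2]⟩,
        fun hx => h2 (by rw [hx])⟩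

lemma isSemiSat_comap_mp (h : IsSemiSat F (G'.comap ⇑e)) : IsSemiSat F G' := by
  intro u v huv hnadj
  have h1 : e.symm u ≠ e.symm v := fun h' => huv (e.symm.injective h')
  have h2 : ¬ (G'.comap ⇑e).Adj (e.symm u) (e.symm v) := by
    simpa [SimpleGraph.comap] using hnadj
  obtain ⟨f, hf, x, y, hxy, hfx, hfy⟩ := h _ _ h1 h2
  have hP : ∃ f : F →g (G' ⊔ fromEdgeSet {s(u, v)}).comap ⇑e,
      Function.Injective f ∧ ∃ x y, F.Adj x y ∧ f x = e.symm u ∧ f y = e.symm v := by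
    rw [← comap_sup_fromEdgeSet]
    exact ⟨f, hf, x, y, hxy, hfx, hfy⟩
  obtain ⟨f', hf', x', y', hxy', hfx', hfy'⟩ := hP
  refine ⟨(SimpleGraph.Hom.comap ⇑e _).comp f', e.injective.comp hf', x', y', hxy', ?_, ?_⟩
  · show e (f' x') = u
    rw [hfx']
    simp
  · show e (f' y') = v
    rw [hfy']
    simp

lemma isSemiSat_comap_iff : IsSemiSat F (G'.comap ⇑e) ↔ IsSemiSat F G' := by
  refine ⟨isSemiSat_comap_mp e G', fun h => ?_⟩
  have h2 := isSemiSat_comap_mp (F := F) e.symm (G'.comap ⇑e)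
  rw [comap_comap_symm] at h2
  exact h2 h

lemma isSat_comap_iff : IsSat F (G'.comap ⇑e) ↔ IsSat F G' := by
  unfold IsSat IsFree
  rw [hasCopy_comap_iff, isSemiSat_comap_iff]

lemma ncard_edgeSet_comap : (G'.comap ⇑e).edgeSet.ncard = G'.edgeSet.ncard := by
  rw [← Nat.card_coe_set_eq, ← Nat.card_coe_set_eq]
  exact Nat.card_congr (Iso.mapEdgeSet (comapIso e G'))

end comapTransport

@[simp] lemma cone_adj_none_iff {H : SimpleGraph W} {x : Option W} :
    (cone H).Adj none x ↔ x ≠ none := by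
  cases x <;> simp

lemma edgeSet_cone (H : SimpleGraph W) :
    (cone H).edgeSet = (Sym2.map some '' H.edgeSet)
      ∪ ((fun w => s((none : Option W), some w)) '' Set.univ) := by
  ext z
  induction z using Sym2.ind with
  | _ x y =>
    rcases x with _ | x <;> rcases y with _ | y <;>
      simp only [SimpleGraph.mem_edgeSet, Set.mem_union, Set.mem_image, Set.mem_univ,
        Sym2.exists, Sym2.map_pair_eq, Sym2.eq_iff, true_and]
    · simp [cone]
    · simp
    · simp
    · show H.Adj x y ↔ _
      constructor
      · intro a
        exact Or.inl ⟨x, y, a, Or.inl ⟨rfl, rfl⟩⟩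
      · rintro (⟨w, w', hww, (⟨h1, h2⟩ | ⟨h1, h2⟩)⟩ | ⟨w, (⟨h1, h2⟩ | ⟨h1, h2⟩)⟩)
        · rw [← Option.some_injective _ h1, ← Option.some_injective _ h2]
          exact hww
        · rw [← Option.some_injective _ h1, ← Option.some_injective _ h2]
          exact hww.symm
        · exact absurd h1 (by simp)
        · exact absurd h1 (by simp)

lemma ncard_edgeSet_cone [Fintype W] (H : SimpleGraph W) :
    (cone H).edgeSet.ncard = Fintype.card W + H.edgeSet.ncard := by
  classical
  have hinj1 : Function.Injective (Sym2.map (some : W → Option W)) :=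
    Sym2.map.injective (Option.some_injective W)
  have hinj2 : Function.Injective (fun w : W => s((none : Option W), some w)) := by
    intro x y h
    simp only [Sym2.eq_iff] at h
    rcases h with ⟨-, h⟩ | ⟨h, -⟩
    · exact Option.some_injective _ h
    · exact absurd h (by simp)
  have hdisj : Disjoint (Sym2.map (some : W → Option W) '' H.edgeSet)
      ((fun w : W => s((none : Option W), some w)) '' Set.univ) := by
    rw [Set.disjoint_left]
    rintro z ⟨w, hw, rfl⟩ ⟨w', -, heq⟩
    induction w using Sym2.ind with
    | _ a b =>
      rw [Sym2.map_pair_eq] at heq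
      simp [Sym2.eq_iff] at heq
  rw [edgeSet_cone, Set.ncard_union_eq hdisj (Set.toFinite _) (Set.toFinite _),
    Set.ncard_image_of_injective _ hinj1, Set.ncard_image_of_injective _ hinj2,
    Set.ncard_univ, Nat.card_eq_fintype_card]
  exact Nat.add_comm _ _

lemma ncard_compl_singleton {n : ℕ} (u : Fin n) :
    ({u}ᶜ : Set (Fin n)).ncard = n - 1 := by
  have h := Set.ncard_add_ncard_compl ({u} : Set (Fin n))
  rw [Set.ncard_singleton, Nat.card_eq_fintype_card, Fintype.card_fin] at h
  omega

lemma adj_of_ncard_neighborSet {n : ℕ} (G : SimpleGraph (Fin n)) (u : Fin n)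
    (h : (G.neighborSet u).ncard = n - 1) : ∀ v, v ≠ u → G.Adj u v := by
  have hsub : G.neighborSet u ⊆ ({u}ᶜ : Set (Fin n)) := by
    intro v hv
    simp only [Set.mem_compl_iff, Set.mem_singleton_iff]
    exact fun he => G.irrefl (he ▸ hv)
  have heq : G.neighborSet u = ({u}ᶜ : Set (Fin n)) :=
    Set.eq_of_subset_of_ncard_le hsub (by rw [h, ncard_compl_singleton]) (Set.toFinite _)
  intro v hv
  have : v ∈ G.neighborSet u := by
    rw [heq]
    simpa using hv
  exact this

/-- There exists a `C_k`-saturated graph on `Fin m`, for `k ≥ 3`. -/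
lemma exists_cycle_sat (k m : ℕ) (hk : 3 ≤ k) :
    ∃ Hs : SimpleGraph (Fin m), IsSat (cycleGraph k) Hs := by
  classical
  have hedge : (cycleGraph k).Adj ⟨1, by omega⟩ ⟨0, by omega⟩ := by
    rw [cycleGraph_adj']
    left
    rw [Fin.sub_def]
    show ((k - 0 + 1) % k : ℕ) = 1
    rw [Nat.sub_zero, Nat.add_comm, Nat.add_mod_right]
    exact Nat.mod_eq_of_lt (by omega)
  set A := {c : ℕ | ∃ G : SimpleGraph (Fin m), IsFree (cycleGraph k) G ∧ G.edgeSet.ncard = c}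
    with hA
  have hbotfree : IsFree (cycleGraph k) (⊥ : SimpleGraph (Fin m)) := by
    rintro ⟨f, -⟩
    exact f.map_adj hedge
  have hAne : A.Nonempty := ⟨_, ⊥, hbotfree, rfl⟩
  have hAbdd : BddAbove A := by
    refine ⟨Nat.card (Sym2 (Fin m)), ?_⟩
    rintro c ⟨G, -, rfl⟩
    rw [← Set.ncard_univ]
    exact Set.ncard_le_ncard (Set.subset_univ _) (Set.toFinite _)
  obtain ⟨G, hGfree, hGcard⟩ := Nat.sSup_mem hAne hAbdd
  refine ⟨G, hGfree, ?_⟩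
  intro u v hne hnadj
  have hmem : s(u, v) ∈ (G ⊔ fromEdgeSet {s(u, v)}).edgeSet := by
    rw [SimpleGraph.mem_edgeSet, sup_adj, fromEdgeSet_adj]
    exact Or.inr ⟨rfl, hne⟩
  have hssub : G.edgeSet ⊂ (G ⊔ fromEdgeSet {s(u, v)}).edgeSet := by
    constructor
    · exact SimpleGraph.edgeSet_mono le_sup_left
    · intro hsub
      exact hnadj (hsub hmem)
  have hlt : G.edgeSet.ncard < (G ⊔ fromEdgeSet {s(u, v)}).edgeSet.ncard :=
    Set.ncard_lt_ncard hssub (Set.toFinite _)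
  have hnotfree : ¬ IsFree (cycleGraph k) (G ⊔ fromEdgeSet {s(u, v)}) := by
    intro hfree'
    have hle : (G ⊔ fromEdgeSet {s(u, v)}).edgeSet.ncard ≤ sSup A :=
      le_csSup hAbdd ⟨_, hfree', rfl⟩
    omega
  have hcopy : HasCopy (cycleGraph k) (G ⊔ fromEdgeSet {s(u, v)}) := not_not.mp hnotfree
  obtain ⟨g, hg⟩ := hcopy
  obtain ⟨x, y, hxy, hgx, hgy⟩ := cycle_uses_edge hGfree g hg
  exact ⟨g, hg, x, y, hxy, hgx, hgy⟩

/-- For `n > k ≥ 4`, the minimum number of edges of a `W_k`-saturated graph on `n`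
vertices having a vertex of degree `n - 1` equals `(n - 1) + sat(n - 1, C_k)`. -/
theorem sat_wheel_conical (k n : ℕ) (hk : 4 ≤ k) (hn : k < n) :
    sInf { m | ∃ G : SimpleGraph (Fin n), IsSat (wheel k) G ∧
        (∃ u : Fin n, (G.neighborSet u).ncard = n - 1) ∧ G.edgeSet.ncard = m }
      = (n - 1) + satNumber (cycleGraph k) (n - 1) := by
  classical
  have hmn : (n - 1) + 1 = n := by omega
  set e : Fin n ≃ Option (Fin (n - 1)) :=
    (finCongr hmn.symm).trans (finSuccEquiv (n - 1)) with he
  set T := { c | ∃ H : SimpleGraph (Fin (n - 1)),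
    IsSat (cycleGraph k) H ∧ H.edgeSet.ncard = c } with hT
  set S := { c | ∃ G : SimpleGraph (Fin n), IsSat (wheel k) G ∧
    (∃ u : Fin n, (G.neighborSet u).ncard = n - 1) ∧ G.edgeSet.ncard = c } with hS
  have stepA : ∀ c, c ∈ T → (n - 1) + c ∈ S := by
    rintro c ⟨H, hH, rfl⟩
    refine ⟨(cone H).comap ⇑e,
      (isSat_comap_iff e (cone H)).mpr (isSat_cone_of_isSat hH), ⟨e.symm none, ?_⟩, ?_⟩
    · have hset : ((cone H).comap ⇑e).neighborSet (e.symm none)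
          = ({e.symm none}ᶜ : Set (Fin n)) := by
        ext v
        simp only [SimpleGraph.mem_neighborSet, SimpleGraph.comap_adj,
          Equiv.apply_symm_apply, cone_adj_none_iff, Set.mem_compl_iff,
          Set.mem_singleton_iff, ne_eq, Equiv.apply_eq_iff_eq_symm_apply]
      rw [hset, ncard_compl_singleton]
    · rw [ncard_edgeSet_comap, ncard_edgeSet_cone, Fintype.card_fin]
  have stepB : ∀ c, c ∈ S → ∃ c', c' ∈ T ∧ c = (n - 1) + c' := by
    rintro c ⟨G, hG, ⟨u, hu⟩, rfl⟩
    have hdom := adj_of_ncard_neighborSet G u hu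
    set e' : Fin n ≃ Option (Fin (n - 1)) := (Equiv.swap u (e.symm none)).trans e with he'
    have he'u : e' u = none := by
      rw [he', Equiv.trans_apply, Equiv.swap_apply_left, Equiv.apply_symm_apply]
    set H := G.comap (fun a : Fin (n - 1) => e'.symm (some a)) with hHdef
    have hkey : G = (cone H).comap ⇑e' := by
      ext x y
      show G.Adj x y ↔ (cone H).Adj (e' x) (e' y)
      have hx' : e'.symm (e' x) = x := e'.symm_apply_apply x
      have hy' : e'.symm (e' y) = y := e'.symm_apply_apply y
      rcases hex : e' x with _ | a <;> rcases hey : e' y with _ | b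
      · have hxu : x = u := by rw [← hx', hex, ← he'u, e'.symm_apply_apply]
        have hyu : y = u := by rw [← hy', hey, ← he'u, e'.symm_apply_apply]
        constructor
        · intro h
          exact absurd h (by rw [hxu, hyu]; exact G.irrefl)
        · intro h
          exact absurd h (by simp)
      · have hxu : x = u := by rw [← hx', hex, ← he'u, e'.symm_apply_apply]
        constructor
        · intro _
          simp
        · intro _
          have hyne : y ≠ u := by
            intro h
            rw [h, he'u] at hey
            cases hey
          rw [hxu]
          exact hdom y hyne
      · have hyu : y = u := by rw [← hy', hey, ← he'u, e'.symm_apply_apply]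
        constructor
        · intro _
          simp
        · intro _
          have hxne : x ≠ u := by
            intro h
            rw [h, he'u] at hex
            cases hex
          rw [hyu]
          exact (hdom x hxne).symm
      · show G.Adj x y ↔ H.Adj a b
        have hiff : H.Adj a b ↔ G.Adj (e'.symm (some a)) (e'.symm (some b)) := Iff.rfl
        rw [hiff, ← hex, ← hey, hx', hy']
    have hG' : IsSat (wheel k) ((cone H).comap ⇑e') := hkey ▸ hG
    have hHs : IsSat (cycleGraph k) H :=
      isSat_of_isSat_cone ((isSat_comap_iff e' (cone H)).mp hG')
    refine ⟨H.edgeSet.ncard, ⟨H, hHs, rfl⟩, ?_⟩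
    conv_lhs => rw [hkey]
    rw [ncard_edgeSet_comap, ncard_edgeSet_cone, Fintype.card_fin]
  obtain ⟨Hs, hHsat⟩ := exists_cycle_sat k (n - 1) (by omega)
  have hTne : T.Nonempty := ⟨Hs.edgeSet.ncard, Hs, hHsat, rfl⟩
  have hmemS : (n - 1) + sInf T ∈ S := stepA _ (Nat.sInf_mem hTne)
  have hle : sInf S ≤ (n - 1) + sInf T := Nat.sInf_le hmemS
  have hSne : S.Nonempty := ⟨_, hmemS⟩
  obtain ⟨c', hc'T, hc'eq⟩ := stepB _ (Nat.sInf_mem hSne)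
  have hge := Nat.sInf_le hc'T
  have hsat : satNumber (cycleGraph k) (n - 1) = sInf T := rfl
  rw [hsat]
  omega
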